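/- Let $w=\log\rho$ with $\rho(x,y)=(x^4+4y^2)^{1/4}$ on the Grushin plane. Then at every point with $\rho\neq 0$, the symmetrized horizontal Hessian $(D^2_{\mathcal{X}}w)^*$ (a $2\times 2$ symmetric matrix) has trace $\mathrm{Tr}((D^2_{\mathcal{X}}w)^*) = x^2/\rho^4$ and determinant $\det((D^2_{\mathcal{X}}w)^*) = -(2x^4+y^2)/\rho^8$; consequently its eigenvalues are $\frac{x^2\pm\sqrt{9x^4+4y^2}}{2\rho^4}$, one nonnegative and one nonpositive. -/

import Mathlib

noncomputable section

/-- Grushin homogeneous norm `ρ(x,y) = (x⁴ + 4y²)^{1/4}` on the plane. -/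
def rhoG (x y : ℝ) : ℝ := (x ^ 4 + 4 * y ^ 2) ^ (1/4 : ℝ)

/-- Derivative along the Grushin field `X = ∂ₓ`. -/
def GX (u : ℝ → ℝ → ℝ) (x y : ℝ) : ℝ := deriv (fun s => u s y) x

/-- Derivative along the Grushin field `Y = x ∂_y`. -/
def GY (u : ℝ → ℝ → ℝ) (x y : ℝ) : ℝ := x * deriv (fun s => u x s) y

/-- Symmetrized horizontal Hessian `((D²_𝒳u)*)ᵢⱼ = (ZᵢZⱼu + ZⱼZᵢu)/2`, `Z₁=X`, `Z₂=Y`. -/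
def HessG (u : ℝ → ℝ → ℝ) (x y : ℝ) : Matrix (Fin 2) (Fin 2) ℝ :=
  !![GX (GX u) x y, (GX (GY u) x y + GY (GX u) x y) / 2;
     (GX (GY u) x y + GY (GX u) x y) / 2, GY (GY u) x y]

/-- `w = log ρ` on the Grushin plane. -/
def wG (x y : ℝ) : ℝ := Real.log (rhoG x y)

open Real Filter

lemma hQx (x y : ℝ) : HasDerivAt (fun s : ℝ => s ^ 4 + 4 * y ^ 2) (4 * x ^ 3) x := by
  simpa using (hasDerivAt_pow 4 x).add_const (4 * y ^ 2)

lemma hQy (x y : ℝ) : HasDerivAt (fun s : ℝ => x ^ 4 + 4 * s ^ 2) (8 * y) y := by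
  have h := ((hasDerivAt_pow 2 y).const_mul 4).const_add (x ^ 4)
  simpa using h.congr_deriv (by ring)

lemma wG_eq (x y : ℝ) : wG x y = Real.log (x ^ 4 + 4 * y ^ 2) / 4 := by
  unfold wG rhoG
  rcases eq_or_lt_of_le (by positivity : (0:ℝ) ≤ x ^ 4 + 4 * y ^ 2) with h | h
  · rw [← h, Real.zero_rpow (by norm_num), Real.log_zero]; norm_num
  · rw [Real.log_rpow h]; ring

lemma GX_wG (x y : ℝ) (hq : 0 < x ^ 4 + 4 * y ^ 2) :
    GX wG x y = x ^ 3 / (x ^ 4 + 4 * y ^ 2) := by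
  unfold GX
  have h : (fun s => wG s y) = fun s => Real.log (s ^ 4 + 4 * y ^ 2) / 4 :=
    funext fun s => wG_eq s y
  rw [h, (((hQx x y).log hq.ne').div_const 4).deriv]
  field_simp

lemma GY_wG (x y : ℝ) (hq : 0 < x ^ 4 + 4 * y ^ 2) :
    GY wG x y = 2 * x * y / (x ^ 4 + 4 * y ^ 2) := by
  unfold GY
  have h : (fun s => wG x s) = fun s => Real.log (x ^ 4 + 4 * s ^ 2) / 4 :=
    funext fun s => wG_eq x s
  rw [h, (((hQy x y).log hq.ne').div_const 4).deriv]
  field_simp; ring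

lemma evx (x y : ℝ) (hq : 0 < x ^ 4 + 4 * y ^ 2) :
    ∀ᶠ s in nhds x, 0 < s ^ 4 + 4 * y ^ 2 := by
  have hc : ContinuousAt (fun s : ℝ => s ^ 4 + 4 * y ^ 2) x := by fun_prop
  exact hc (Ioi_mem_nhds hq)

lemma evy (x y : ℝ) (hq : 0 < x ^ 4 + 4 * y ^ 2) :
    ∀ᶠ s in nhds y, 0 < x ^ 4 + 4 * s ^ 2 := by
  have hc : ContinuousAt (fun s : ℝ => x ^ 4 + 4 * s ^ 2) y := by fun_prop
  exact hc (Ioi_mem_nhds hq)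

lemma GXGX (x y : ℝ) (hq : 0 < x ^ 4 + 4 * y ^ 2) :
    GX (GX wG) x y = (3 * x ^ 2 * (x ^ 4 + 4 * y ^ 2) - 4 * x ^ 6) / (x ^ 4 + 4 * y ^ 2) ^ 2 := by
  show deriv (fun s => GX wG s y) x = _
  have hev : (fun s => GX wG s y) =ᶠ[nhds x] fun s => s ^ 3 / (s ^ 4 + 4 * y ^ 2) := by
    filter_upwards [evx x y hq] with s hs using GX_wG s y hs
  rw [hev.deriv_eq, (HasDerivAt.deriv (f := (fun s => s ^ 3 / (s ^ 4 + 4 * y ^ 2))) ((hasDerivAt_pow 3 x).div (hQx x y) hq.ne'))]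
  push_cast; ring

lemma GXGY (x y : ℝ) (hq : 0 < x ^ 4 + 4 * y ^ 2) :
    GX (GY wG) x y = (2 * y * (x ^ 4 + 4 * y ^ 2) - 8 * x ^ 4 * y) / (x ^ 4 + 4 * y ^ 2) ^ 2 := by
  unfold GX
  have hev : (fun s => GY wG s y) =ᶠ[nhds x] fun s => 2 * s * y / (s ^ 4 + 4 * y ^ 2) := by
    filter_upwards [evx x y hq] with s hs using GY_wG s y hs
  have hnum : HasDerivAt (fun s : ℝ => 2 * s * y) (2 * y) x := by
    simpa using ((hasDerivAt_id x).const_mul 2).mul_const y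
  rw [hev.deriv_eq, (HasDerivAt.deriv (f := (fun s => 2 * s * y / (s ^ 4 + 4 * y ^ 2))) (hnum.div (hQx x y) hq.ne'))]
  ring

lemma GYGX (x y : ℝ) (hq : 0 < x ^ 4 + 4 * y ^ 2) :
    GY (GX wG) x y = -(8 * x ^ 4 * y) / (x ^ 4 + 4 * y ^ 2) ^ 2 := by
  unfold GY
  have hev : (fun s => GX wG x s) =ᶠ[nhds y] fun s => x ^ 3 / (x ^ 4 + 4 * s ^ 2) := by
    filter_upwards [evy x y hq] with s hs using GX_wG x s hs
  rw [hev.deriv_eq, (HasDerivAt.deriv (f := (fun s => x ^ 3 / (x ^ 4 + 4 * s ^ 2))) ((hasDerivAt_const y (x ^ 3)).div (hQy x y) hq.ne'))]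
  field_simp; ring

lemma GYGY (x y : ℝ) (hq : 0 < x ^ 4 + 4 * y ^ 2) :
    GY (GY wG) x y = (2 * x ^ 2 * (x ^ 4 + 4 * y ^ 2) - 16 * x ^ 2 * y ^ 2) / (x ^ 4 + 4 * y ^ 2) ^ 2 := by
  show x * deriv (fun s => GY wG x s) y = _
  have hev : (fun s => GY wG x s) =ᶠ[nhds y] fun s => 2 * x * s / (x ^ 4 + 4 * s ^ 2) := by
    filter_upwards [evy x y hq] with s hs using GY_wG x s hs
  have hnum : HasDerivAt (fun s : ℝ => 2 * x * s) (2 * x) y := by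
    simpa using (hasDerivAt_id y).const_mul (2 * x)
  rw [hev.deriv_eq, (HasDerivAt.deriv (f := (fun s => 2 * x * s / (x ^ 4 + 4 * s ^ 2))) (hnum.div (hQy x y) hq.ne'))]
  field_simp; ring

lemma eig_aux (a b d lam : ℝ) (h : lam ^ 2 - (a + d) * lam + (a * d - b * b) = 0) :
    ∃ u : Fin 2 → ℝ, u ≠ 0 ∧ (!![a, b; b, d]).mulVec u = lam • u := by
  by_cases hb : b = 0
  · subst hb
    have hfac : (lam - a) * (lam - d) = 0 := by linear_combination h
    rcases mul_eq_zero.mp hfac with h1 | h1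
    · refine ⟨![1, 0], ?_, ?_⟩
      · intro hc; simpa using congrFun hc 0
      · funext i; fin_cases i <;>
          simp [Matrix.mulVec, dotProduct] <;> linarith
    · refine ⟨![0, 1], ?_, ?_⟩
      · intro hc; simpa using congrFun hc 1
      · funext i; fin_cases i <;>
          simp [Matrix.mulVec, dotProduct] <;> linarith
  · refine ⟨![b, lam - a], ?_, ?_⟩
    · intro hc; exact hb (by simpa using congrFun hc 0)
    · funext i; fin_cases i <;>
        simp [Matrix.mulVec, dotProduct] <;> ring_nf <;> nlinarith [h]

lemma eig_grushin (x y lam : ℝ) (hq : 0 < x ^ 4 + 4 * y ^ 2)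
    (hchar : lam ^ 2 - (x ^ 2 / (x ^ 4 + 4 * y ^ 2)) * lam +
      (-(2 * x ^ 4 + y ^ 2) / (x ^ 4 + 4 * y ^ 2) ^ 2) = 0) :
    ∃ u : Fin 2 → ℝ, u ≠ 0 ∧
      (!![(3 * x ^ 2 * (x ^ 4 + 4 * y ^ 2) - 4 * x ^ 6) / (x ^ 4 + 4 * y ^ 2) ^ 2,
         ((2 * y * (x ^ 4 + 4 * y ^ 2) - 8 * x ^ 4 * y) / (x ^ 4 + 4 * y ^ 2) ^ 2 +
          -(8 * x ^ 4 * y) / (x ^ 4 + 4 * y ^ 2) ^ 2) / 2;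
         ((2 * y * (x ^ 4 + 4 * y ^ 2) - 8 * x ^ 4 * y) / (x ^ 4 + 4 * y ^ 2) ^ 2 +
          -(8 * x ^ 4 * y) / (x ^ 4 + 4 * y ^ 2) ^ 2) / 2,
         (2 * x ^ 2 * (x ^ 4 + 4 * y ^ 2) - 16 * x ^ 2 * y ^ 2) /
           (x ^ 4 + 4 * y ^ 2) ^ 2]).mulVec u = lam • u := by
  apply eig_aux
  have hsum : (3 * x ^ 2 * (x ^ 4 + 4 * y ^ 2) - 4 * x ^ 6) / (x ^ 4 + 4 * y ^ 2) ^ 2 +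
      (2 * x ^ 2 * (x ^ 4 + 4 * y ^ 2) - 16 * x ^ 2 * y ^ 2) / (x ^ 4 + 4 * y ^ 2) ^ 2 =
      x ^ 2 / (x ^ 4 + 4 * y ^ 2) := by
    field_simp; ring
  have hdet : (3 * x ^ 2 * (x ^ 4 + 4 * y ^ 2) - 4 * x ^ 6) / (x ^ 4 + 4 * y ^ 2) ^ 2 *
        ((2 * x ^ 2 * (x ^ 4 + 4 * y ^ 2) - 16 * x ^ 2 * y ^ 2) / (x ^ 4 + 4 * y ^ 2) ^ 2) -
      ((2 * y * (x ^ 4 + 4 * y ^ 2) - 8 * x ^ 4 * y) / (x ^ 4 + 4 * y ^ 2) ^ 2 +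
          -(8 * x ^ 4 * y) / (x ^ 4 + 4 * y ^ 2) ^ 2) / 2 *
        (((2 * y * (x ^ 4 + 4 * y ^ 2) - 8 * x ^ 4 * y) / (x ^ 4 + 4 * y ^ 2) ^ 2 +
          -(8 * x ^ 4 * y) / (x ^ 4 + 4 * y ^ 2) ^ 2) / 2) =
      -(2 * x ^ 4 + y ^ 2) / (x ^ 4 + 4 * y ^ 2) ^ 2 := by
    field_simp; ring
  rw [hsum, hdet]
  exact hchar

/-- at every point with `ρ ≠ 0`, the symmetrized horizontal Hessian of
`w = log ρ` has trace `x²/ρ⁴` and determinant `-(2x⁴+y²)/ρ⁸`; consequently its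
eigenvalues are `(x² ± √(9x⁴+4y²))/(2ρ⁴)`, one nonnegative and one nonpositive. -/
theorem stmt9 (x y : ℝ) (hρ : rhoG x y ≠ 0) :
    Matrix.trace (HessG wG x y) = x ^ 2 / rhoG x y ^ 4 ∧
    Matrix.det (HessG wG x y) = -(2 * x ^ 4 + y ^ 2) / rhoG x y ^ 8 ∧
    (∃ u : Fin 2 → ℝ, u ≠ 0 ∧ (HessG wG x y).mulVec u =
      ((x ^ 2 + Real.sqrt (9 * x ^ 4 + 4 * y ^ 2)) / (2 * rhoG x y ^ 4)) • u) ∧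
    (∃ u : Fin 2 → ℝ, u ≠ 0 ∧ (HessG wG x y).mulVec u =
      ((x ^ 2 - Real.sqrt (9 * x ^ 4 + 4 * y ^ 2)) / (2 * rhoG x y ^ 4)) • u) ∧
    0 ≤ (x ^ 2 + Real.sqrt (9 * x ^ 4 + 4 * y ^ 2)) / (2 * rhoG x y ^ 4) ∧
    (x ^ 2 - Real.sqrt (9 * x ^ 4 + 4 * y ^ 2)) / (2 * rhoG x y ^ 4) ≤ 0 := by
  have hq0 : x ^ 4 + 4 * y ^ 2 ≠ 0 := by
    intro h
    exact hρ (by rw [rhoG, h, Real.zero_rpow (by norm_num)])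
  have hq : 0 < x ^ 4 + 4 * y ^ 2 := lt_of_le_of_ne (by positivity) (Ne.symm hq0)
  have rho4 : rhoG x y ^ 4 = x ^ 4 + 4 * y ^ 2 := by
    rw [rhoG, ← Real.rpow_natCast (((x ^ 4 + 4 * y ^ 2) ^ (1/4:ℝ))) 4,
      ← Real.rpow_mul hq.le]
    norm_num
  have rho8 : rhoG x y ^ 8 = (x ^ 4 + 4 * y ^ 2) ^ 2 := by
    have : rhoG x y ^ 8 = (rhoG x y ^ 4) ^ 2 := by ring
    rw [this, rho4]
  have Hrw : HessG wG x y =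
      !![(3 * x ^ 2 * (x ^ 4 + 4 * y ^ 2) - 4 * x ^ 6) / (x ^ 4 + 4 * y ^ 2) ^ 2,
         ((2 * y * (x ^ 4 + 4 * y ^ 2) - 8 * x ^ 4 * y) / (x ^ 4 + 4 * y ^ 2) ^ 2 +
          -(8 * x ^ 4 * y) / (x ^ 4 + 4 * y ^ 2) ^ 2) / 2;
         ((2 * y * (x ^ 4 + 4 * y ^ 2) - 8 * x ^ 4 * y) / (x ^ 4 + 4 * y ^ 2) ^ 2 +
          -(8 * x ^ 4 * y) / (x ^ 4 + 4 * y ^ 2) ^ 2) / 2,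
         (2 * x ^ 2 * (x ^ 4 + 4 * y ^ 2) - 16 * x ^ 2 * y ^ 2) / (x ^ 4 + 4 * y ^ 2) ^ 2] := by
    rw [HessG, GXGX x y hq, GXGY x y hq, GYGX x y hq, GYGY x y hq]
  have hS : Real.sqrt (9 * x ^ 4 + 4 * y ^ 2) ^ 2 = 9 * x ^ 4 + 4 * y ^ 2 :=
    Real.sq_sqrt (by positivity)
  have hSnn : 0 ≤ Real.sqrt (9 * x ^ 4 + 4 * y ^ 2) := Real.sqrt_nonneg _
  have hxS : x ^ 2 ≤ Real.sqrt (9 * x ^ 4 + 4 * y ^ 2) := by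
    rw [show x ^ 2 = Real.sqrt ((x ^ 2) ^ 2) from (Real.sqrt_sq (sq_nonneg x)).symm]
    exact Real.sqrt_le_sqrt (by nlinarith)
  set S := Real.sqrt (9 * x ^ 4 + 4 * y ^ 2) with hSdef
  refine ⟨?_, ?_, ?_, ?_, ?_, ?_⟩
  · rw [Hrw, Matrix.trace_fin_two_of, rho4]
    field_simp; ring
  · rw [Hrw, Matrix.det_fin_two_of, rho8]
    field_simp; ring
  · rw [Hrw, rho4]
    apply eig_grushin x y _ hq
    have expand : ((x ^ 2 + S) / (2 * (x ^ 4 + 4 * y ^ 2))) ^ 2 -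
        (x ^ 2 / (x ^ 4 + 4 * y ^ 2)) *
          ((x ^ 2 + S) / (2 * (x ^ 4 + 4 * y ^ 2))) +
        (-(2 * x ^ 4 + y ^ 2) / (x ^ 4 + 4 * y ^ 2) ^ 2) =
        (S ^ 2 - (9 * x ^ 4 + 4 * y ^ 2)) /
          (4 * (x ^ 4 + 4 * y ^ 2) ^ 2) := by
      field_simp; ring
    rw [expand, hS, sub_self, zero_div]
  · rw [Hrw, rho4]
    apply eig_grushin x y _ hq
    have expand : ((x ^ 2 - S) / (2 * (x ^ 4 + 4 * y ^ 2))) ^ 2 -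
        (x ^ 2 / (x ^ 4 + 4 * y ^ 2)) *
          ((x ^ 2 - S) / (2 * (x ^ 4 + 4 * y ^ 2))) +
        (-(2 * x ^ 4 + y ^ 2) / (x ^ 4 + 4 * y ^ 2) ^ 2) =
        (S ^ 2 - (9 * x ^ 4 + 4 * y ^ 2)) /
          (4 * (x ^ 4 + 4 * y ^ 2) ^ 2) := by
      field_simp; ring
    rw [expand, hS, sub_self, zero_div]
  · rw [rho4]
    exact div_nonneg (by positivity) (by positivity)
  · rw [rho4]
    exact div_nonpos_of_nonpos_of_nonneg (by linarith) (by positivity)
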